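/- Let a = t_0 < t_1 < … < t_n = b be a partition of [a, b] with maximum spacing τ = max_k (t_k − t_{k−1}), and let K ≥ 0. Let x : [a, b] → ℝ, o : [a, b] → ℝ, and let c : [a, b] → ℝ be piecewise cubic: on each [t_{k−1}, t_k], c agrees with a polynomial of degree at most 3. Set ô = o + c and e = x − ô. Assume: (i) e is twice continuously differentiable on [a, b]; (ii) on each open subinterval (t_{k−1}, t_k), x − o is four times differentiable with |(x − o)⁗(t)| ≤ K; (iii) e(t_k) = 0 for all 0 ≤ k ≤ n; (iv) e''(a) = e''(b) = 0. Then |x'(t) − ô'(t)| ≤ (1/12)·K·τ³ for all t ∈ [a, b]. -/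

import Mathlib

set_option maxHeartbeats 2000000

open Set

namespace CSSCaux




/-- derivative helpers for w(y) = (y-p)^2 (y-q)^2 / 24 -/
lemma hw0 (p q s : ℝ) : HasDerivAt (fun y => (y-p)^2*(y-q)^2/24)
    (((s-p)*(s-q)^2 + (s-p)^2*(s-q))/12) s := by
  have h1 : HasDerivAt (fun y : ℝ => (y-p)^2) (2*(s-p)) s := by
    simpa using ((hasDerivAt_id s).sub_const p).fun_pow 2
  have h2 : HasDerivAt (fun y : ℝ => (y-q)^2) (2*(s-q)) s := by
    simpa using ((hasDerivAt_id s).sub_const q).fun_pow 2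
  have := (h1.fun_mul h2).div_const 24
  exact this.congr_deriv (by ring)

lemma hw1 (p q s : ℝ) : HasDerivAt (fun y => ((y-p)*(y-q)^2 + (y-p)^2*(y-q))/12)
    (((s-q)^2 + 4*(s-p)*(s-q) + (s-p)^2)/12) s := by
  have h1 : HasDerivAt (fun y : ℝ => (y-p)) 1 s := (hasDerivAt_id s).sub_const p
  have h2 : HasDerivAt (fun y : ℝ => (y-q)) 1 s := (hasDerivAt_id s).sub_const q
  have h1' : HasDerivAt (fun y : ℝ => (y-p)^2) (2*(s-p)) s := by
    simpa using ((hasDerivAt_id s).sub_const p).fun_pow 2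
  have h2' : HasDerivAt (fun y : ℝ => (y-q)^2) (2*(s-q)) s := by
    simpa using ((hasDerivAt_id s).sub_const q).fun_pow 2
  have := ((h1.fun_mul h2').fun_add (h1'.fun_mul h2)).div_const 12
  exact this.congr_deriv (by ring)

lemma hw2 (p q s : ℝ) : HasDerivAt (fun y => ((y-q)^2 + 4*(y-p)*(y-q) + (y-p)^2)/12)
    ((2*s-p-q)/2) s := by
  have h1 : HasDerivAt (fun y : ℝ => (y-p)) 1 s := (hasDerivAt_id s).sub_const p
  have h2 : HasDerivAt (fun y : ℝ => (y-q)) 1 s := (hasDerivAt_id s).sub_const q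
  have h1' : HasDerivAt (fun y : ℝ => (y-p)^2) (2*(s-p)) s := by
    simpa using ((hasDerivAt_id s).sub_const p).fun_pow 2
  have h2' : HasDerivAt (fun y : ℝ => (y-q)^2) (2*(s-q)) s := by
    simpa using ((hasDerivAt_id s).sub_const q).fun_pow 2
  have h := ((h2'.fun_add (((h1.fun_mul h2).const_mul 4))).fun_add h1').div_const 12
  have heq : (fun y : ℝ => ((y-q)^2 + 4*(y-p)*(y-q) + (y-p)^2)/12)
      = (fun y : ℝ => ((y-q)^2 + 4*((y-p)*(y-q)) + (y-p)^2)/12) := by funext y; ring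
  rw [heq]
  exact h.congr_deriv (by ring)

lemma hw3 (p q s : ℝ) : HasDerivAt (fun y : ℝ => (2*y-p-q)/2) 1 s := by
  have : HasDerivAt (fun y : ℝ => 2*y-p-q) 2 s := by
    simpa using (((hasDerivAt_id s).const_mul 2).sub_const p).sub_const q
  have := this.div_const 2
  exact this.congr_deriv (by ring)

/-- Rolle helper: from three zeros of g2 get a zero of g4. -/
lemma chain2 {p q : ℝ} {g2 g3 g4 : ℝ → ℝ}
    (hc2 : ContinuousOn g2 (Icc p q))
    (h3 : ∀ s ∈ Ioo p q, HasDerivAt g2 (g3 s) s)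
    (h4 : ∀ s ∈ Ioo p q, HasDerivAt g3 (g4 s) s)
    {z1 z2 z3 : ℝ} (h12 : z1 < z2) (h23 : z2 < z3)
    (hz1 : p ≤ z1) (hz3 : z3 ≤ q)
    (e1 : g2 z1 = 0) (e2 : g2 z2 = 0) (e3 : g2 z3 = 0) :
    ∃ ζ ∈ Ioo p q, g4 ζ = 0 := by
  have hsub12 : Ioo z1 z2 ⊆ Ioo p q := Ioo_subset_Ioo hz1 (le_trans h23.le hz3)
  have hsub23 : Ioo z2 z3 ⊆ Ioo p q := Ioo_subset_Ioo (le_trans hz1 h12.le) hz3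
  obtain ⟨θ1, hθ1, hθ1z⟩ := exists_hasDerivAt_eq_zero h12
    (hc2.mono (Icc_subset_Icc hz1 (le_trans h23.le hz3))) (by rw [e1, e2])
    (fun s hs => h3 s (hsub12 hs))
  obtain ⟨θ2, hθ2, hθ2z⟩ := exists_hasDerivAt_eq_zero h23
    (hc2.mono (Icc_subset_Icc (le_trans hz1 h12.le) hz3)) (by rw [e2, e3])
    (fun s hs => h3 s (hsub23 hs))
  have hθ12 : θ1 < θ2 := lt_trans hθ1.2 hθ2.1
  have hsubθ : Icc θ1 θ2 ⊆ Ioo p q := by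
    intro y hy
    exact ⟨lt_of_lt_of_le (hsub12 hθ1).1 hy.1, lt_of_le_of_lt hy.2 (hsub23 hθ2).2⟩
  have hg3c : ContinuousOn g3 (Icc θ1 θ2) := fun y hy =>
    ((h4 y (hsubθ hy)).continuousAt).continuousWithinAt
  obtain ⟨ζ, hζ, hζz⟩ := exists_hasDerivAt_eq_zero hθ12 hg3c (by rw [hθ1z, hθ2z])
    (fun s hs => h4 s (hsubθ (Ioo_subset_Icc_self hs)))
  exact ⟨ζ, hsubθ (Ioo_subset_Icc_self hζ), hζz⟩


section core
variable {p q K : ℝ} {f f1 f2 f3 f4 : ℝ → ℝ}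

/-- Sets up the comparison function g = f - lam*w and its derivative chain. -/
lemma lam_le_K (hpq : p < q)
    (hcf2 : ContinuousOn f2 (Icc p q))
    (h3 : ∀ s ∈ Ioo p q, HasDerivAt f2 (f3 s) s)
    (h4 : ∀ s ∈ Ioo p q, HasDerivAt f3 (f4 s) s)
    (hb : ∀ s ∈ Ioo p q, |f4 s| ≤ K) (lam : ℝ)
    {z1 z2 z3 : ℝ} (h12 : z1 < z2) (h23 : z2 < z3)
    (hz1 : p ≤ z1) (hz3 : z3 ≤ q)
    (e1 : f2 z1 - lam * (((z1-q)^2 + 4*(z1-p)*(z1-q) + (z1-p)^2)/12) = 0)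
    (e2 : f2 z2 - lam * (((z2-q)^2 + 4*(z2-p)*(z2-q) + (z2-p)^2)/12) = 0)
    (e3 : f2 z3 - lam * (((z3-q)^2 + 4*(z3-p)*(z3-q) + (z3-p)^2)/12) = 0) :
    |lam| ≤ K := by
  have hcg2 : ContinuousOn (fun y => f2 y - lam * (((y-q)^2 + 4*(y-p)*(y-q) + (y-p)^2)/12)) (Icc p q) :=
    hcf2.sub (Continuous.continuousOn (by continuity))
  have hg3 : ∀ s ∈ Ioo p q, HasDerivAt
      (fun y => f2 y - lam * (((y-q)^2 + 4*(y-p)*(y-q) + (y-p)^2)/12))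
      (f3 s - lam * ((2*s-p-q)/2)) s :=
    fun s hs => (h3 s hs).sub ((hw2 p q s).const_mul lam)
  have hg4 : ∀ s ∈ Ioo p q, HasDerivAt (fun y => f3 y - lam * ((2*y-p-q)/2))
      (f4 s - lam) s := by
    intro s hs
    have := (h4 s hs).fun_sub ((hw3 p q s).const_mul lam)
    simpa using this
  obtain ⟨ζ, hζ, hζz⟩ := chain2 hcg2 hg3 hg4 h12 h23 hz1 hz3 e1 e2 e3
  have : f4 ζ = lam := by linarith [sub_eq_zero.mp hζz]
  calc |lam| = |f4 ζ| := by rw [this]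
    _ ≤ K := hb ζ hζ

lemma lemA_q (hpq : p < q)
    (hcf : ContinuousOn f (Icc p q)) (hcf1 : ContinuousOn f1 (Icc p q))
    (hcf2 : ContinuousOn f2 (Icc p q))
    (h1 : ∀ s ∈ Ioo p q, HasDerivAt f (f1 s) s)
    (h2 : ∀ s ∈ Ioo p q, HasDerivAt f1 (f2 s) s)
    (h3 : ∀ s ∈ Ioo p q, HasDerivAt f2 (f3 s) s)
    (h4 : ∀ s ∈ Ioo p q, HasDerivAt f3 (f4 s) s)
    (hb : ∀ s ∈ Ioo p q, |f4 s| ≤ K)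
    (hfp : f p = 0) (hfq : f q = 0) (hf1p : f1 p = 0) (hf1q : f1 q = 0) :
    |f2 q| ≤ K * (q-p)^2 / 12 := by
  have hne : q - p ≠ 0 := sub_ne_zero.mpr hpq.ne'
  set lam := 12 * f2 q / (q-p)^2 with hlam
  set g : ℝ → ℝ := fun y => f y - lam * ((y-p)^2*(y-q)^2/24) with hg
  set g1 : ℝ → ℝ := fun y => f1 y - lam * (((y-p)*(y-q)^2 + (y-p)^2*(y-q))/12) with hg1d
  have hcg : ContinuousOn g (Icc p q) := hcf.sub (Continuous.continuousOn (by continuity))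
  have hcg1 : ContinuousOn g1 (Icc p q) := hcf1.sub (Continuous.continuousOn (by continuity))
  have hg1 : ∀ s ∈ Ioo p q, HasDerivAt g (g1 s) s :=
    fun s hs => (h1 s hs).sub ((hw0 p q s).const_mul lam)
  have hg2 : ∀ s ∈ Ioo p q, HasDerivAt g1
      (f2 s - lam * (((s-q)^2 + 4*(s-p)*(s-q) + (s-p)^2)/12)) s :=
    fun s hs => (h2 s hs).sub ((hw1 p q s).const_mul lam)
  obtain ⟨ξ, hξ, hξz⟩ := exists_hasDerivAt_eq_zero hpq hcg
    (by simp [hg, hfp, hfq]) hg1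
  obtain ⟨η1, hη1, hη1z⟩ := exists_hasDerivAt_eq_zero hξ.1
    (hcg1.mono (Icc_subset_Icc le_rfl hξ.2.le))
    (by rw [hξz]; simp [hg1d, hf1p])
    (fun s hs => hg2 s (Ioo_subset_Ioo le_rfl hξ.2.le hs))
  obtain ⟨η2, hη2, hη2z⟩ := exists_hasDerivAt_eq_zero hξ.2
    (hcg1.mono (Icc_subset_Icc hξ.1.le le_rfl))
    (by rw [hξz]; simp [hg1d, hf1q])
    (fun s hs => hg2 s (Ioo_subset_Ioo hξ.1.le le_rfl hs))
  have hlamK : |lam| ≤ K := by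
    refine lam_le_K hpq hcf2 h3 h4 hb lam (lt_trans hη1.2 hη2.1) hη2.2
      (le_of_lt hη1.1) le_rfl hη1z hη2z ?_
    show f2 q - lam * (((q-q)^2 + 4*(q-p)*(q-q) + (q-p)^2)/12) = 0
    rw [hlam]; field_simp; try ring
  have h2q : f2 q = lam * ((q-p)^2/12) := by rw [hlam]; field_simp; try ring
  rw [h2q, abs_mul]
  have : |(q-p)^2/12| = (q-p)^2/12 := abs_of_nonneg (by positivity)
  rw [this]
  rw [mul_div_assoc]
  exact mul_le_mul_of_nonneg_right hlamK (by positivity)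

lemma lemA_p (hpq : p < q)
    (hcf : ContinuousOn f (Icc p q)) (hcf1 : ContinuousOn f1 (Icc p q))
    (hcf2 : ContinuousOn f2 (Icc p q))
    (h1 : ∀ s ∈ Ioo p q, HasDerivAt f (f1 s) s)
    (h2 : ∀ s ∈ Ioo p q, HasDerivAt f1 (f2 s) s)
    (h3 : ∀ s ∈ Ioo p q, HasDerivAt f2 (f3 s) s)
    (h4 : ∀ s ∈ Ioo p q, HasDerivAt f3 (f4 s) s)
    (hb : ∀ s ∈ Ioo p q, |f4 s| ≤ K)
    (hfp : f p = 0) (hfq : f q = 0) (hf1p : f1 p = 0) (hf1q : f1 q = 0) :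
    |f2 p| ≤ K * (q-p)^2 / 12 := by
  have hne : q - p ≠ 0 := sub_ne_zero.mpr hpq.ne'
  set lam := 12 * f2 p / (q-p)^2 with hlam
  set g : ℝ → ℝ := fun y => f y - lam * ((y-p)^2*(y-q)^2/24) with hg
  set g1 : ℝ → ℝ := fun y => f1 y - lam * (((y-p)*(y-q)^2 + (y-p)^2*(y-q))/12) with hg1d
  have hcg : ContinuousOn g (Icc p q) := hcf.sub (Continuous.continuousOn (by continuity))
  have hcg1 : ContinuousOn g1 (Icc p q) := hcf1.sub (Continuous.continuousOn (by continuity))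
  have hg1 : ∀ s ∈ Ioo p q, HasDerivAt g (g1 s) s :=
    fun s hs => (h1 s hs).sub ((hw0 p q s).const_mul lam)
  have hg2 : ∀ s ∈ Ioo p q, HasDerivAt g1
      (f2 s - lam * (((s-q)^2 + 4*(s-p)*(s-q) + (s-p)^2)/12)) s :=
    fun s hs => (h2 s hs).sub ((hw1 p q s).const_mul lam)
  obtain ⟨ξ, hξ, hξz⟩ := exists_hasDerivAt_eq_zero hpq hcg
    (by simp [hg, hfp, hfq]) hg1
  obtain ⟨η1, hη1, hη1z⟩ := exists_hasDerivAt_eq_zero hξ.1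
    (hcg1.mono (Icc_subset_Icc le_rfl hξ.2.le))
    (by rw [hξz]; simp [hg1d, hf1p])
    (fun s hs => hg2 s (Ioo_subset_Ioo le_rfl hξ.2.le hs))
  obtain ⟨η2, hη2, hη2z⟩ := exists_hasDerivAt_eq_zero hξ.2
    (hcg1.mono (Icc_subset_Icc hξ.1.le le_rfl))
    (by rw [hξz]; simp [hg1d, hf1q])
    (fun s hs => hg2 s (Ioo_subset_Ioo hξ.1.le le_rfl hs))
  have hlamK : |lam| ≤ K := by
    refine lam_le_K hpq hcf2 h3 h4 hb lam hη1.1 (lt_trans hη1.2 hη2.1)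
      le_rfl (le_of_lt hη2.2) ?_ hη1z hη2z
    show f2 p - lam * (((p-q)^2 + 4*(p-p)*(p-q) + (p-p)^2)/12) = 0
    rw [hlam]; field_simp; try ring
  have h2p : f2 p = lam * ((q-p)^2/12) := by rw [hlam]; field_simp; try ring
  rw [h2p, abs_mul]
  have : |(q-p)^2/12| = (q-p)^2/12 := abs_of_nonneg (by positivity)
  rw [this, mul_div_assoc]
  exact mul_le_mul_of_nonneg_right hlamK (by positivity)

set_option maxHeartbeats 1000000 in
lemma lemV (hpq : p < q) (hK : 0 ≤ K)
    (hcf : ContinuousOn f (Icc p q)) (hcf1 : ContinuousOn f1 (Icc p q))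
    (hcf2 : ContinuousOn f2 (Icc p q))
    (h1 : ∀ s ∈ Ioo p q, HasDerivAt f (f1 s) s)
    (h2 : ∀ s ∈ Ioo p q, HasDerivAt f1 (f2 s) s)
    (h3 : ∀ s ∈ Ioo p q, HasDerivAt f2 (f3 s) s)
    (h4 : ∀ s ∈ Ioo p q, HasDerivAt f3 (f4 s) s)
    (hb : ∀ s ∈ Ioo p q, |f4 s| ≤ K)
    (hfp : f p = 0) (hfq : f q = 0) (hf1p : f1 p = 0) (hf1q : f1 q = 0) :
    ∀ s ∈ Icc p q, |f s| ≤ K * ((s-p)^2*(q-s)^2) / 24 := by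
  intro s hs
  rcases eq_or_lt_of_le hs.1 with he | hps
  · rw [← he, hfp]; simp
  rcases eq_or_lt_of_le hs.2 with he | hsq
  · rw [he, hfq]; simp
  have hnep : s - p ≠ 0 := sub_ne_zero.mpr hps.ne'
  have hneq : s - q ≠ 0 := sub_ne_zero.mpr hsq.ne
  set lam := 24 * f s / ((s-p)^2*(s-q)^2) with hlam
  set g : ℝ → ℝ := fun y => f y - lam * ((y-p)^2*(y-q)^2/24) with hg
  set g1 : ℝ → ℝ := fun y => f1 y - lam * (((y-p)*(y-q)^2 + (y-p)^2*(y-q))/12) with hg1d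
  have hcg : ContinuousOn g (Icc p q) := hcf.sub (Continuous.continuousOn (by continuity))
  have hcg1 : ContinuousOn g1 (Icc p q) := hcf1.sub (Continuous.continuousOn (by continuity))
  have hg1 : ∀ y ∈ Ioo p q, HasDerivAt g (g1 y) y :=
    fun y hy => (h1 y hy).sub ((hw0 p q y).const_mul lam)
  have hg2 : ∀ y ∈ Ioo p q, HasDerivAt g1
      (f2 y - lam * (((y-q)^2 + 4*(y-p)*(y-q) + (y-p)^2)/12)) y :=
    fun y hy => (h2 y hy).sub ((hw1 p q y).const_mul lam)
  have hgp : g p = 0 := by simp [hg, hfp]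
  have hgq : g q = 0 := by simp [hg, hfq]
  have hgs : g s = 0 := by
    show f s - lam * ((s-p)^2*(s-q)^2/24) = 0
    rw [hlam]; field_simp; try ring
  obtain ⟨ξ1, hξ1, hξ1z⟩ := exists_hasDerivAt_eq_zero hps
    (hcg.mono (Icc_subset_Icc le_rfl hsq.le)) (by rw [hgp, hgs])
    (fun y hy => hg1 y (Ioo_subset_Ioo le_rfl hsq.le hy))
  obtain ⟨ξ2, hξ2, hξ2z⟩ := exists_hasDerivAt_eq_zero hsq
    (hcg.mono (Icc_subset_Icc hps.le le_rfl)) (by rw [hgq, hgs])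
    (fun y hy => hg1 y (Ioo_subset_Ioo hps.le le_rfl hy))
  -- g1 has zeros at p < ξ1 < ξ2 < q
  have hg1p : g1 p = 0 := by simp [hg1d, hf1p]
  have hg1q : g1 q = 0 := by simp [hg1d, hf1q]
  have hξ12 : ξ1 < ξ2 := lt_trans hξ1.2 hξ2.1
  obtain ⟨χ1, hχ1, hχ1z⟩ := exists_hasDerivAt_eq_zero hξ1.1
    (hcg1.mono (Icc_subset_Icc le_rfl (le_trans hξ1.2.le hsq.le)))
    (by rw [hg1p, hξ1z])
    (fun y hy => hg2 y (Ioo_subset_Ioo le_rfl (le_trans hξ1.2.le hsq.le) hy))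
  obtain ⟨χ2, hχ2, hχ2z⟩ := exists_hasDerivAt_eq_zero hξ12
    (hcg1.mono (Icc_subset_Icc hξ1.1.le (le_of_lt hξ2.2)))
    (by rw [hξ1z, hξ2z])
    (fun y hy => hg2 y (Ioo_subset_Ioo hξ1.1.le (le_of_lt hξ2.2) hy))
  obtain ⟨χ3, hχ3, hχ3z⟩ := exists_hasDerivAt_eq_zero hξ2.2
    (hcg1.mono (Icc_subset_Icc (le_trans hps.le hξ2.1.le) le_rfl))
    (by rw [hg1q, hξ2z])
    (fun y hy => hg2 y (Ioo_subset_Ioo (le_trans hps.le hξ2.1.le) le_rfl hy))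
  have hlamK : |lam| ≤ K := by
    refine lam_le_K hpq hcf2 h3 h4 hb lam (lt_trans hχ1.2 hχ2.1) (lt_trans hχ2.2 hχ3.1)
      (le_of_lt hχ1.1) (le_of_lt hχ3.2) hχ1z hχ2z hχ3z
  have hfs : f s = lam * ((s-p)^2*(s-q)^2/24) := by rw [hlam]; field_simp; try ring
  rw [hfs, abs_mul]
  have h1' : |(s-p)^2*(s-q)^2/24| = (s-p)^2*(s-q)^2/24 := abs_of_nonneg (by positivity)
  rw [h1']
  nlinarith [mul_le_mul_of_nonneg_right hlamK (show (0:ℝ) ≤ (s-p)^2*(s-q)^2/24 by positivity)]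

end core

/-! ### Hermite cubic -/

noncomputable def hcA (p q vp sp vq sq : ℝ) : ℝ := 3*(vq-vp)/(q-p)^2 - (2*sp+sq)/(q-p)
noncomputable def hcB (p q vp sp vq sq : ℝ) : ℝ := (sq+sp)/(q-p)^2 - 2*(vq-vp)/(q-p)^3
noncomputable def herm (p q vp sp vq sq : ℝ) : ℝ → ℝ := fun y =>
  vp + sp*(y-p) + hcA p q vp sp vq sq*(y-p)^2 + hcB p q vp sp vq sq*(y-p)^3
noncomputable def herm1 (p q vp sp vq sq : ℝ) : ℝ → ℝ := fun y =>
  sp + 2*hcA p q vp sp vq sq*(y-p) + 3*hcB p q vp sp vq sq*(y-p)^2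
noncomputable def herm2 (p q vp sp vq sq : ℝ) : ℝ → ℝ := fun y =>
  2*hcA p q vp sp vq sq + 6*hcB p q vp sp vq sq*(y-p)
noncomputable def herm3 (p q vp sp vq sq : ℝ) : ℝ → ℝ := fun _ =>
  6*hcB p q vp sp vq sq

section hermAPI
variable (p q vp sp vq sq s : ℝ)

lemma herm_cont : Continuous (herm p q vp sp vq sq) := by unfold herm; continuity
lemma herm1_cont : Continuous (herm1 p q vp sp vq sq) := by unfold herm1; continuity
lemma herm2_cont : Continuous (herm2 p q vp sp vq sq) := by unfold herm2; continuity

lemma herm_hasDeriv : HasDerivAt (herm p q vp sp vq sq) (herm1 p q vp sp vq sq s) s := by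
  unfold herm herm1
  have h1 : HasDerivAt (fun y : ℝ => y - p) 1 s := (hasDerivAt_id s).sub_const p
  have h2 : HasDerivAt (fun y : ℝ => (y-p)^2) (2*(s-p)) s := by
    simpa using ((hasDerivAt_id s).sub_const p).fun_pow 2
  have h3 : HasDerivAt (fun y : ℝ => (y-p)^3) (3*(s-p)^2) s := by
    simpa using ((hasDerivAt_id s).sub_const p).fun_pow 3
  have := (((h1.const_mul sp).const_add vp).fun_add
    (h2.const_mul (hcA p q vp sp vq sq))).fun_add (h3.const_mul (hcB p q vp sp vq sq))
  exact this.congr_deriv (by ring)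

lemma herm1_hasDeriv : HasDerivAt (herm1 p q vp sp vq sq) (herm2 p q vp sp vq sq s) s := by
  unfold herm1 herm2
  have h1 : HasDerivAt (fun y : ℝ => y - p) 1 s := (hasDerivAt_id s).sub_const p
  have h2 : HasDerivAt (fun y : ℝ => (y-p)^2) (2*(s-p)) s := by
    simpa using ((hasDerivAt_id s).sub_const p).fun_pow 2
  have := ((h1.const_mul (2*hcA p q vp sp vq sq)).const_add sp).fun_add
    (h2.const_mul (3*hcB p q vp sp vq sq))
  exact this.congr_deriv (by ring)

lemma herm2_hasDeriv : HasDerivAt (herm2 p q vp sp vq sq) (herm3 p q vp sp vq sq s) s := by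
  unfold herm2 herm3
  have h1 : HasDerivAt (fun y : ℝ => y - p) 1 s := (hasDerivAt_id s).sub_const p
  have := (h1.const_mul (6*hcB p q vp sp vq sq)).const_add (2*hcA p q vp sp vq sq)
  exact this.congr_deriv (by ring)

lemma herm3_hasDeriv : HasDerivAt (herm3 p q vp sp vq sq) 0 s := hasDerivAt_const s _

lemma herm_at_p : herm p q vp sp vq sq p = vp := by simp [herm]
lemma herm1_at_p : herm1 p q vp sp vq sq p = sp := by simp [herm1]

lemma herm_at_q (h : p < q) : herm p q vp sp vq sq q = vq := by
  have h0 : q - p ≠ 0 := sub_ne_zero.mpr h.ne'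
  unfold herm hcA hcB; field_simp; ring

lemma herm1_at_q (h : p < q) : herm1 p q vp sp vq sq q = sq := by
  have h0 : q - p ≠ 0 := sub_ne_zero.mpr h.ne'
  unfold herm1 hcA hcB; field_simp; ring

lemma herm2_at_p (h : p < q) :
    herm2 p q vp sp vq sq p = 6*(vq-vp)/(q-p)^2 - 2*(2*sp+sq)/(q-p) := by
  have h0 : q - p ≠ 0 := sub_ne_zero.mpr h.ne'
  unfold herm2 hcA hcB; field_simp; ring

lemma herm2_at_q (h : p < q) :
    herm2 p q vp sp vq sq q = 2*(sp+2*sq)/(q-p) - 6*(vq-vp)/(q-p)^2 := by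
  have h0 : q - p ≠ 0 := sub_ne_zero.mpr h.ne'
  unfold herm2 hcA hcB; field_simp; ring

end hermAPI

lemma key_ineq {h u : ℝ} (h0 : 0 ≤ u) (hu : u ≤ h) :
    |(h-u)*(h-3*u)| + |u*(3*u-2*h)| ≤ h^2 := by
  rcases le_or_gt (3*u) h with hc1 | hc1
  · rw [abs_of_nonneg (mul_nonneg (by linarith) (by linarith)),
      abs_of_nonpos (mul_nonpos_of_nonneg_of_nonpos h0 (by linarith))]
    nlinarith
  rcases le_or_gt (3*u) (2*h) with hc2 | hc2
  · rw [abs_of_nonpos (mul_nonpos_of_nonneg_of_nonpos (by linarith) (by linarith)),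
      abs_of_nonpos (mul_nonpos_of_nonneg_of_nonpos h0 (by linarith))]
    nlinarith [sq_nonneg (h - 2*u)]
  · rw [abs_of_nonpos (mul_nonpos_of_nonneg_of_nonpos (by linarith) (by linarith)),
      abs_of_nonneg (mul_nonneg h0 (by linarith))]
    nlinarith

lemma herm1_bound {p q : ℝ} (hpq : p < q) (mp mq : ℝ) {s : ℝ} (hs : s ∈ Icc p q) :
    |herm1 p q 0 mp 0 mq s| ≤ max |mp| |mq| := by
  have h0 : q - p ≠ 0 := sub_ne_zero.mpr hpq.ne'
  have h2pos : (0:ℝ) < (q-p)^2 := by positivity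
  set h := q - p with hh
  set u := s - p with hu
  have hid : herm1 p q 0 mp 0 mq s
      = (mp*((h-u)*(h-3*u)) + mq*(u*(3*u-2*h)))/h^2 := by
    unfold herm1 hcA hcB; rw [hh, hu]; field_simp [show q - p ≠ 0 from sub_ne_zero.mpr hpq.ne']; ring
  set M := max |mp| |mq| with hM
  have hM0 : 0 ≤ M := le_trans (abs_nonneg mp) (le_max_left _ _)
  rw [hid, abs_div, abs_of_nonneg (sq_nonneg h)]
  rw [div_le_iff₀ h2pos]
  have hkey : |(h-u)*(h-3*u)| + |u*(3*u-2*h)| ≤ h^2 :=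
    key_ineq (by simp [hu]; linarith [hs.1]) (by simp [hu, hh]; linarith [hs.2])
  calc |mp*((h-u)*(h-3*u)) + mq*(u*(3*u-2*h))|
      ≤ |mp*((h-u)*(h-3*u))| + |mq*(u*(3*u-2*h))| := abs_add_le _ _
    _ = |mp| * |(h-u)*(h-3*u)| + |mq| * |u*(3*u-2*h)| := by rw [abs_mul mp, abs_mul mq]
    _ ≤ M * |(h-u)*(h-3*u)| + M * |u*(3*u-2*h)| := by
        gcongr
        · exact le_max_left _ _
        · exact le_max_right _ _
    _ = M * (|(h-u)*(h-3*u)| + |u*(3*u-2*h)|) := by ring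
    _ ≤ M * h^2 := mul_le_mul_of_nonneg_left hkey hM0

section core2
variable {p q K : ℝ} {f f1 f2 f3 f4 : ℝ → ℝ}

/-- Pointwise second-derivative bound for a function with double zeros at both ends. -/
lemma lemDpt (hpq : p < q) (hK : 0 ≤ K)
    (hcf : ContinuousOn f (Icc p q)) (hcf1 : ContinuousOn f1 (Icc p q))
    (hcf2 : ContinuousOn f2 (Icc p q))
    (h1 : ∀ s ∈ Ioo p q, HasDerivAt f (f1 s) s)
    (h2 : ∀ s ∈ Ioo p q, HasDerivAt f1 (f2 s) s)
    (h3 : ∀ s ∈ Ioo p q, HasDerivAt f2 (f3 s) s)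
    (h4 : ∀ s ∈ Ioo p q, HasDerivAt f3 (f4 s) s)
    (hb : ∀ s ∈ Ioo p q, |f4 s| ≤ K)
    (hfp : f p = 0) (hfq : f q = 0) (hf1p : f1 p = 0) (hf1q : f1 q = 0) :
    ∀ s ∈ Icc p q, |f2 s| ≤ K * (q-p)^2 / 12 := by
  intro s hs
  rcases eq_or_lt_of_le hs.1 with he | hps
  · rw [← he]
    exact lemA_p hpq hcf hcf1 hcf2 h1 h2 h3 h4 hb hfp hfq hf1p hf1q
  rcases eq_or_lt_of_le hs.2 with he | hsq
  · rw [he]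
    exact lemA_q hpq hcf hcf1 hcf2 h1 h2 h3 h4 hb hfp hfq hf1p hf1q
  have hδ : (0:ℝ) < s - p := by linarith
  have hε : (0:ℝ) < q - s := by linarith
  have hδne : s - p ≠ 0 := hδ.ne'
  have hεne : q - s ≠ 0 := hε.ne'
  set X := f2 s with hX
  set Y := f1 s with hY
  set R := f s with hR
  -- left interval [p,s]
  have key1 : |(s-p)^2*X - 4*(s-p)*Y + 6*R| ≤ K*(s-p)^4/12 := by
    set C := herm p s 0 0 R Y with hC
    have hIsub : Icc p s ⊆ Icc p q := Icc_subset_Icc le_rfl hsq.le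
    have hOsub : Ioo p s ⊆ Ioo p q := Ioo_subset_Ioo le_rfl hsq.le
    have hres : |f2 s - herm2 p s 0 0 R Y s| ≤ K * (s-p)^2 / 12 := by
      refine lemA_q hps
        ((hcf.mono hIsub).sub (herm_cont p s 0 0 R Y).continuousOn)
        ((hcf1.mono hIsub).sub (herm1_cont p s 0 0 R Y).continuousOn)
        ((hcf2.mono hIsub).sub (herm2_cont p s 0 0 R Y).continuousOn)
        (fun y hy => ((h1 y (hOsub hy)).sub (herm_hasDeriv p s 0 0 R Y y)))
        (fun y hy => ((h2 y (hOsub hy)).sub (herm1_hasDeriv p s 0 0 R Y y)))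
        (fun y hy => ((h3 y (hOsub hy)).sub (herm2_hasDeriv p s 0 0 R Y y)))
        (fun y hy => by simpa using ((h4 y (hOsub hy)).fun_sub (herm3_hasDeriv p s 0 0 R Y y)))
        (fun y hy => hb y (hOsub hy)) ?_ ?_ ?_ ?_
      · simp [herm_at_p, hfp]
      · show f s - herm p s 0 0 R Y s = 0; rw [herm_at_q p s 0 0 R Y hps]; exact sub_self _
      · simp [herm1_at_p, hf1p]
      · show f1 s - herm1 p s 0 0 R Y s = 0; rw [herm1_at_q p s 0 0 R Y hps]; exact sub_self _
    have hval : herm2 p s 0 0 R Y s = 2*(0+2*Y)/(s-p) - 6*(R-0)/(s-p)^2 :=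
      herm2_at_q p s 0 0 R Y hps
    have hfact : (s-p)^2*X - 4*(s-p)*Y + 6*R
        = (s-p)^2 * (f2 s - herm2 p s 0 0 R Y s) := by
      rw [hval, hX]; field_simp; ring
    rw [hfact, abs_mul, abs_of_nonneg (sq_nonneg (s-p))]
    calc (s-p)^2 * |f2 s - herm2 p s 0 0 R Y s| ≤ (s-p)^2 * (K*(s-p)^2/12) :=
          mul_le_mul_of_nonneg_left hres (sq_nonneg _)
      _ = K*(s-p)^4/12 := by ring
  -- right interval [s,q]
  have key2 : |(q-s)^2*X + 4*(q-s)*Y + 6*R| ≤ K*(q-s)^4/12 := by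
    set C := herm s q R Y 0 0 with hC
    have hIsub : Icc s q ⊆ Icc p q := Icc_subset_Icc hps.le le_rfl
    have hOsub : Ioo s q ⊆ Ioo p q := Ioo_subset_Ioo hps.le le_rfl
    have hres : |f2 s - herm2 s q R Y 0 0 s| ≤ K * (q-s)^2 / 12 := by
      refine lemA_p hsq
        ((hcf.mono hIsub).sub (herm_cont s q R Y 0 0).continuousOn)
        ((hcf1.mono hIsub).sub (herm1_cont s q R Y 0 0).continuousOn)
        ((hcf2.mono hIsub).sub (herm2_cont s q R Y 0 0).continuousOn)
        (fun y hy => ((h1 y (hOsub hy)).sub (herm_hasDeriv s q R Y 0 0 y)))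
        (fun y hy => ((h2 y (hOsub hy)).sub (herm1_hasDeriv s q R Y 0 0 y)))
        (fun y hy => ((h3 y (hOsub hy)).sub (herm2_hasDeriv s q R Y 0 0 y)))
        (fun y hy => by simpa using ((h4 y (hOsub hy)).fun_sub (herm3_hasDeriv s q R Y 0 0 y)))
        (fun y hy => hb y (hOsub hy)) ?_ ?_ ?_ ?_
      · simp [herm_at_p, hR]
      · simp [herm_at_q s q R Y 0 0 hsq, hfq]
      · simp [herm1_at_p, hY]
      · simp [herm1_at_q s q R Y 0 0 hsq, hf1q]
    have hval : herm2 s q R Y 0 0 s = 6*(0-R)/(q-s)^2 - 2*(2*Y+0)/(q-s) :=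
      herm2_at_p s q R Y 0 0 hsq
    have hfact : (q-s)^2*X + 4*(q-s)*Y + 6*R
        = (q-s)^2 * (f2 s - herm2 s q R Y 0 0 s) := by
      rw [hval, hX]; field_simp; ring
    rw [hfact, abs_mul, abs_of_nonneg (sq_nonneg (q-s))]
    calc (q-s)^2 * |f2 s - herm2 s q R Y 0 0 s| ≤ (q-s)^2 * (K*(q-s)^2/12) :=
          mul_le_mul_of_nonneg_left hres (sq_nonneg _)
      _ = K*(q-s)^4/12 := by ring
  have keyV : |R| ≤ K * ((s-p)^2*(q-s)^2) / 24 :=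
    lemV hpq hK hcf hcf1 hcf2 h1 h2 h3 h4 hb hfp hfq hf1p hf1q s hs
  -- combine
  have hfac : (0:ℝ) < (s-p)*(q-s)*((s-p)+(q-s)) := by positivity
  have k1u := (abs_le.mp key1).2
  have k1l := (abs_le.mp key1).1
  have k2u := (abs_le.mp key2).2
  have k2l := (abs_le.mp key2).1
  have kVu := (abs_le.mp keyV).2
  have kVl := (abs_le.mp keyV).1
  rw [abs_le]
  constructor
  · have u1 : (q-s)*(-(K*(s-p)^4/12)) ≤ (q-s)*((s-p)^2*X - 4*(s-p)*Y + 6*R) :=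
      mul_le_mul_of_nonneg_left k1l hε.le
    have u2 : (s-p)*(-(K*(q-s)^4/12)) ≤ (s-p)*((q-s)^2*X + 4*(q-s)*Y + 6*R) :=
      mul_le_mul_of_nonneg_left k2l hδ.le
    have u3 : (6*((s-p)+(q-s)))*R ≤ (6*((s-p)+(q-s)))*(K*((s-p)^2*(q-s)^2)/24) :=
      mul_le_mul_of_nonneg_left (le_trans (le_abs_self R) (by linarith [keyV])) (by positivity)
    have hgoal : -(K*(q-p)^2/12) * ((s-p)*(q-s)*((s-p)+(q-s)))
        ≤ X * ((s-p)*(q-s)*((s-p)+(q-s))) := by linarith [u1, u2, u3]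
    exact le_of_mul_le_mul_right hgoal hfac
  · have u1 : (q-s)*((s-p)^2*X - 4*(s-p)*Y + 6*R) ≤ (q-s)*(K*(s-p)^4/12) :=
      mul_le_mul_of_nonneg_left k1u hε.le
    have u2 : (s-p)*((q-s)^2*X + 4*(q-s)*Y + 6*R) ≤ (s-p)*(K*(q-s)^4/12) :=
      mul_le_mul_of_nonneg_left k2u hδ.le
    have u3 : (6*((s-p)+(q-s)))*(-R) ≤ (6*((s-p)+(q-s)))*(K*((s-p)^2*(q-s)^2)/24) :=
      mul_le_mul_of_nonneg_left (le_trans (neg_le_abs R) (by linarith [keyV])) (by positivity)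
    have hgoal : X * ((s-p)*(q-s)*((s-p)+(q-s)))
        ≤ (K*(q-p)^2/12) * ((s-p)*(q-s)*((s-p)+(q-s))) := by linarith [u1, u2, u3]
    exact le_of_mul_le_mul_right hgoal hfac

/-- First-derivative bound for a function with double zeros at both ends. -/
lemma lemBpt (hpq : p < q) (hK : 0 ≤ K)
    (hcf : ContinuousOn f (Icc p q)) (hcf1 : ContinuousOn f1 (Icc p q))
    (hcf2 : ContinuousOn f2 (Icc p q))
    (h1 : ∀ s ∈ Ioo p q, HasDerivAt f (f1 s) s)
    (h2 : ∀ s ∈ Ioo p q, HasDerivAt f1 (f2 s) s)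
    (h3 : ∀ s ∈ Ioo p q, HasDerivAt f2 (f3 s) s)
    (h4 : ∀ s ∈ Ioo p q, HasDerivAt f3 (f4 s) s)
    (hb : ∀ s ∈ Ioo p q, |f4 s| ≤ K)
    (hfp : f p = 0) (hfq : f q = 0) (hf1p : f1 p = 0) (hf1q : f1 q = 0) :
    ∀ s ∈ Icc p q, |f1 s| ≤ K * (q-p)^3 / 24 := by
  have hDpt := lemDpt hpq hK hcf hcf1 hcf2 h1 h2 h3 h4 hb hfp hfq hf1p hf1q
  intro s hs
  have hqp : (0:ℝ) < q - p := by linarith [hpq]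
  rcases le_or_gt (s - p) ((q-p)/2) with hhalf | hhalf
  · rcases eq_or_lt_of_le hs.1 with he | hps
    · rw [← he, hf1p]; simp; positivity
    obtain ⟨θ, hθ, hθs⟩ := exists_hasDerivAt_eq_slope f1 f2 hps
      (hcf1.mono (Icc_subset_Icc le_rfl hs.2))
      (fun y hy => h2 y (Ioo_subset_Ioo le_rfl hs.2 hy))
    have hθI : θ ∈ Icc p q := ⟨hθ.1.le, le_trans hθ.2.le hs.2⟩
    have hsp : s - p ≠ 0 := sub_ne_zero.mpr hps.ne'
    have hf1s : f1 s = f2 θ * (s - p) := by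
      rw [hf1p, sub_zero] at hθs
      field_simp at hθs
      linarith [hθs]
    rw [hf1s, abs_mul]
    have h1' : |f2 θ| ≤ K * (q-p)^2/12 := hDpt θ hθI
    have h2' : |s - p| ≤ (q-p)/2 := by
      rw [abs_of_nonneg (by linarith [hs.1])]; exact hhalf
    calc |f2 θ| * |s-p| ≤ (K*(q-p)^2/12) * ((q-p)/2) := by
          exact mul_le_mul h1' h2' (abs_nonneg _) (by positivity)
      _ = K * (q-p)^3 / 24 := by ring
  · rcases eq_or_lt_of_le hs.2 with he | hsq
    · rw [he, hf1q]; simp; positivity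
    obtain ⟨θ, hθ, hθs⟩ := exists_hasDerivAt_eq_slope f1 f2 hsq
      (hcf1.mono (Icc_subset_Icc hs.1 le_rfl))
      (fun y hy => h2 y (Ioo_subset_Ioo hs.1 le_rfl hy))
    have hθI : θ ∈ Icc p q := ⟨le_trans hs.1 hθ.1.le, hθ.2.le⟩
    have hqs : q - s ≠ 0 := sub_ne_zero.mpr hsq.ne'
    have hf1s : f1 s = -(f2 θ * (q - s)) := by
      rw [hf1q, zero_sub] at hθs
      field_simp at hθs
      linarith [hθs]
    rw [hf1s, abs_neg, abs_mul]
    have h1' : |f2 θ| ≤ K * (q-p)^2/12 := hDpt θ hθI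
    have h2' : |q - s| ≤ (q-p)/2 := by
      rw [abs_of_nonneg (by linarith [hs.2])]; linarith
    calc |f2 θ| * |q-s| ≤ (K*(q-p)^2/12) * ((q-p)/2) := by
          exact mul_le_mul h1' h2' (abs_nonneg _) (by positivity)
      _ = K * (q-p)^3 / 24 := by ring

/-- Per-interval summary: second-derivative endpoint identities and first-derivative bound. -/
lemma piece (hpq : p < q) (hK : 0 ≤ K)
    (hcf : ContinuousOn f (Icc p q)) (hcf1 : ContinuousOn f1 (Icc p q))
    (hcf2 : ContinuousOn f2 (Icc p q))
    (h1 : ∀ s ∈ Ioo p q, HasDerivAt f (f1 s) s)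
    (h2 : ∀ s ∈ Ioo p q, HasDerivAt f1 (f2 s) s)
    (h3 : ∀ s ∈ Ioo p q, HasDerivAt f2 (f3 s) s)
    (h4 : ∀ s ∈ Ioo p q, HasDerivAt f3 (f4 s) s)
    (hb : ∀ s ∈ Ioo p q, |f4 s| ≤ K)
    (hfp : f p = 0) (hfq : f q = 0) :
    |f2 p + 2*(2*f1 p + f1 q)/(q-p)| ≤ K*(q-p)^2/12 ∧
    |f2 q - 2*(f1 p + 2*f1 q)/(q-p)| ≤ K*(q-p)^2/12 ∧
    (∀ s ∈ Icc p q, |f1 s| ≤ max |f1 p| |f1 q| + K*(q-p)^3/24) := by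
  set mp := f1 p with hmp
  set mq := f1 q with hmq
  have hqpne : q - p ≠ 0 := sub_ne_zero.mpr hpq.ne'
  have hcF : ContinuousOn (fun y => f y - herm p q 0 mp 0 mq y) (Icc p q) :=
    hcf.sub (herm_cont p q 0 mp 0 mq).continuousOn
  have hcF1 : ContinuousOn (fun y => f1 y - herm1 p q 0 mp 0 mq y) (Icc p q) :=
    hcf1.sub (herm1_cont p q 0 mp 0 mq).continuousOn
  have hcF2 : ContinuousOn (fun y => f2 y - herm2 p q 0 mp 0 mq y) (Icc p q) :=
    hcf2.sub (herm2_cont p q 0 mp 0 mq).continuousOn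
  have hF1 : ∀ s ∈ Ioo p q, HasDerivAt (fun y => f y - herm p q 0 mp 0 mq y)
      (f1 s - herm1 p q 0 mp 0 mq s) s :=
    fun s hs => (h1 s hs).sub (herm_hasDeriv p q 0 mp 0 mq s)
  have hF2 : ∀ s ∈ Ioo p q, HasDerivAt (fun y => f1 y - herm1 p q 0 mp 0 mq y)
      (f2 s - herm2 p q 0 mp 0 mq s) s :=
    fun s hs => (h2 s hs).sub (herm1_hasDeriv p q 0 mp 0 mq s)
  have hF3 : ∀ s ∈ Ioo p q, HasDerivAt (fun y => f2 y - herm2 p q 0 mp 0 mq y)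
      (f3 s - herm3 p q 0 mp 0 mq s) s :=
    fun s hs => (h3 s hs).sub (herm2_hasDeriv p q 0 mp 0 mq s)
  have hF4 : ∀ s ∈ Ioo p q, HasDerivAt (fun y => f3 y - herm3 p q 0 mp 0 mq y)
      (f4 s) s :=
    fun s hs => by simpa using (h4 s hs).fun_sub (herm3_hasDeriv p q 0 mp 0 mq s)
  have hzp : f p - herm p q 0 mp 0 mq p = 0 := by rw [herm_at_p, hfp]; ring
  have hzq : f q - herm p q 0 mp 0 mq q = 0 := by
    rw [herm_at_q p q 0 mp 0 mq hpq, hfq]; ring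
  have hz1p : f1 p - herm1 p q 0 mp 0 mq p = 0 := by rw [herm1_at_p]; ring
  have hz1q : f1 q - herm1 p q 0 mp 0 mq q = 0 := by
    rw [herm1_at_q p q 0 mp 0 mq hpq]; ring
  refine ⟨?_, ?_, ?_⟩
  · have := lemA_p hpq hcF hcF1 hcF2 hF1 hF2 hF3 hF4 hb hzp hzq hz1p hz1q
    have heq : f2 p - herm2 p q 0 mp 0 mq p = f2 p + 2*(2*mp + mq)/(q-p) := by
      rw [herm2_at_p p q 0 mp 0 mq hpq]; field_simp; ring
    rwa [heq] at this
  · have := lemA_q hpq hcF hcF1 hcF2 hF1 hF2 hF3 hF4 hb hzp hzq hz1p hz1q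
    have heq : f2 q - herm2 p q 0 mp 0 mq q = f2 q - 2*(mp + 2*mq)/(q-p) := by
      rw [herm2_at_q p q 0 mp 0 mq hpq]; field_simp; ring
    rwa [heq] at this
  · intro s hs
    have hB := lemBpt hpq hK hcF hcF1 hcF2 hF1 hF2 hF3 hF4 hb hzp hzq hz1p hz1q s hs
    have hH := herm1_bound hpq mp mq hs
    calc |f1 s| = |herm1 p q 0 mp 0 mq s + (f1 s - herm1 p q 0 mp 0 mq s)| := by ring_nf
      _ ≤ |herm1 p q 0 mp 0 mq s| + |f1 s - herm1 p q 0 mp 0 mq s| := abs_add_le _ _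
      _ ≤ max |mp| |mq| + K*(q-p)^3/24 := add_le_add hH hB

end core2

end CSSCaux

open CSSCaux Set



/-- Theorem 2, r = 1 case: interpolation error bound of CSSC. With
`ô = o + c` where `c` is piecewise cubic on the partition, `e = x − ô` is `C²` on `[a,b]`,
`x − o` is four times differentiable with `|(x − o)⁗| ≤ K` on each open subinterval,
`e` vanishes at all knots and satisfies the natural boundary condition, then
`|x'(t) − ô'(t)| ≤ (1/12)·K·τ³` on `[a,b]`. -/
theorem cssc_deriv_error_bound (n : ℕ) (hn : 1 ≤ n) (t : ℕ → ℝ)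
    (ht : ∀ k, 1 ≤ k → k ≤ n → t (k - 1) < t k)
    (τ : ℝ) (hτ : ∀ k, 1 ≤ k → k ≤ n → t k - t (k - 1) ≤ τ)
    (K : ℝ) (hK : 0 ≤ K) (x o c : ℝ → ℝ)
    (hpc : ∀ k, 1 ≤ k → k ≤ n → ∃ p : Polynomial ℝ, p.degree ≤ 3 ∧
      ∀ s ∈ Set.Icc (t (k - 1)) (t k), c s = p.eval s)
    (hC2 : ContDiffOn ℝ 2 (fun s => x s - (o s + c s)) (Set.Icc (t 0) (t n)))
    (hdiff4 : ∀ k, 1 ≤ k → k ≤ n → ∀ s ∈ Set.Ioo (t (k - 1)) (t k),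
      (∀ i < 4, DifferentiableAt ℝ (deriv^[i] (fun r => x r - o r)) s) ∧
        |deriv^[4] (fun r => x r - o r) s| ≤ K)
    (hknots : ∀ k ≤ n, x (t k) - (o (t k) + c (t k)) = 0)
    (hbda : iteratedDerivWithin 2 (fun s => x s - (o s + c s)) (Set.Icc (t 0) (t n)) (t 0) = 0)
    (hbdb : iteratedDerivWithin 2 (fun s => x s - (o s + c s)) (Set.Icc (t 0) (t n)) (t n) = 0) :
    ∀ s ∈ Set.Icc (t 0) (t n),
      |derivWithin (fun r => x r - (o r + c r)) (Set.Icc (t 0) (t n)) s| ≤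
        (1 / 12) * K * τ ^ 3 := by
  -- basic grid facts
  have hstep : ∀ j, j < n → t j < t (j+1) := by
    intro j hj
    have := ht (j+1) (by omega) (by omega)
    simpa using this
  have hstepτ : ∀ j, j < n → t (j+1) - t j ≤ τ := by
    intro j hj
    have := hτ (j+1) (by omega) (by omega)
    simpa using this
  have hmono : ∀ j, j ≤ n → ∀ i, i ≤ j → t i ≤ t j := by
    intro j
    induction j with
    | zero => intro _ i hi; interval_cases i; exact le_rfl
    | succ k ih =>
      intro hkn i hi
      rcases Nat.lt_succ_iff_lt_or_eq.mp (Nat.lt_succ_of_le hi) with h | h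
      · exact le_trans (ih (by omega) i (by omega)) (hstep k (by omega)).le
      · rw [h]
    
  have hab : t 0 < t n := by
    have h1 : t 0 ≤ t (n-1) := hmono (n-1) (by omega) 0 (by omega)
    have h2 : t (n-1) < t ((n-1)+1) := hstep (n-1) (by omega)
    have h3 : (n-1)+1 = n := by omega
    rw [h3] at h2; linarith
  have hτpos : 0 < τ := lt_of_lt_of_le (sub_pos.mpr (hstep 0 hn)) (hstepτ 0 hn)
  set S : Set ℝ := Set.Icc (t 0) (t n) with hS
  set E : ℝ → ℝ := fun s => x s - (o s + c s) with hE
  set F : ℝ → ℝ := fun r => x r - o r with hF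
  set D1 : ℝ → ℝ := derivWithin E S with hD1
  set D2 : ℝ → ℝ := derivWithin D1 S with hD2
  have hUD : UniqueDiffOn ℝ S := uniqueDiffOn_Icc hab
  have hEc : ContinuousOn E S := hC2.continuousOn
  have hD1cd : ContDiffOn ℝ 1 D1 S := hC2.derivWithin hUD (by norm_num)
  have hD1c : ContinuousOn D1 S := hD1cd.continuousOn
  have hD2cd : ContDiffOn ℝ 0 D2 S := hD1cd.derivWithin hUD (by norm_num)
  have hD2c : ContinuousOn D2 S := hD2cd.continuousOn
  have hED1 : ∀ s ∈ Ioo (t 0) (t n), HasDerivAt E (D1 s) s := by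
    intro s hs
    have hnh : S ∈ nhds s := Icc_mem_nhds hs.1 hs.2
    have hd : DifferentiableWithinAt ℝ E S s :=
      (hC2.differentiableOn (by norm_num)) s (Ioo_subset_Icc_self hs)
    have hda : DifferentiableAt ℝ E s := hd.differentiableAt hnh
    have heq : D1 s = deriv E s := derivWithin_of_mem_nhds hnh
    rw [heq]; exact hda.hasDerivAt
  have hD1D2 : ∀ s ∈ Ioo (t 0) (t n), HasDerivAt D1 (D2 s) s := by
    intro s hs
    have hnh : S ∈ nhds s := Icc_mem_nhds hs.1 hs.2
    have hd : DifferentiableWithinAt ℝ D1 S s :=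
      (hD1cd.differentiableOn (by norm_num)) s (Ioo_subset_Icc_self hs)
    have hda : DifferentiableAt ℝ D1 s := hd.differentiableAt hnh
    have heq : D2 s = deriv D1 s := derivWithin_of_mem_nhds hnh
    rw [heq]; exact hda.hasDerivAt
  -- boundary second derivative values
  have hiter : ∀ y ∈ S, iteratedDerivWithin 2 E S y = D2 y := by
    intro y hy
    rw [iteratedDerivWithin_succ]
    refine derivWithin_congr (fun z hz => ?_) ?_
    · rw [iteratedDerivWithin_one]
    · rw [iteratedDerivWithin_one]
  have hD2a : D2 (t 0) = 0 := by
    rw [← hiter (t 0) (left_mem_Icc.mpr hab.le)]; exact hbda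
  have hD2b : D2 (t n) = 0 := by
    rw [← hiter (t n) (right_mem_Icc.mpr hab.le)]; exact hbdb
  have hpieces : ∀ j, j < n →
      |D2 (t j) + 2*(2*D1 (t j) + D1 (t (j+1)))/(t (j+1) - t j)| ≤ K*(t (j+1) - t j)^2/12 ∧
      |D2 (t (j+1)) - 2*(D1 (t j) + 2*D1 (t (j+1)))/(t (j+1) - t j)| ≤ K*(t (j+1) - t j)^2/12 ∧
      (∀ s ∈ Icc (t j) (t (j+1)), |D1 s| ≤ max |D1 (t j)| |D1 (t (j+1))| + K*(t (j+1) - t j)^3/24) := by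
    intro j hj
    have hj1 : t j < t (j+1) := hstep j hj
    have hpcj : ∃ p : Polynomial ℝ, p.degree ≤ 3 ∧ ∀ s ∈ Icc (t j) (t (j+1)), c s = p.eval s := by
      have := hpc (j+1) (by omega) (by omega)
      simpa using this
    obtain ⟨P, hdeg, hPeq⟩ := hpcj
    have hd4 : ∀ s ∈ Ioo (t j) (t (j+1)),
        (∀ i < 4, DifferentiableAt ℝ (deriv^[i] F) s) ∧ |deriv^[4] F s| ≤ K := by
      have := hdiff4 (j+1) (by omega) (by omega)
      simpa using this
    have hOIoo : Ioo (t j) (t (j+1)) ⊆ Ioo (t 0) (t n) :=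
      Ioo_subset_Ioo (hmono j (by omega) 0 (by omega)) (hmono n le_rfl (j+1) (by omega))
    have hIsub : Icc (t j) (t (j+1)) ⊆ S :=
      Icc_subset_Icc (hmono j (by omega) 0 (by omega)) (hmono n le_rfl (j+1) (by omega))
    have hFd : ∀ i, i < 4 → ∀ s ∈ Ioo (t j) (t (j+1)),
        HasDerivAt (deriv^[i] F) (deriv^[i+1] F s) s := by
      intro i hi s hs
      rw [Function.iterate_succ_apply']
      exact ((hd4 s hs).1 i hi).hasDerivAt
    have hEeq : ∀ s ∈ Ioo (t j) (t (j+1)), E =ᶠ[nhds s] (fun y => F y - P.eval y) := by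
      intro s hs
      refine Filter.eventuallyEq_of_mem (isOpen_Ioo.mem_nhds hs) (fun y hy => ?_)
      show E y = F y - P.eval y
      have h1 : E y = x y - (o y + c y) := rfl
      have h2 : F y = x y - o y := rfl
      rw [h1, h2, hPeq y (Ioo_subset_Icc_self hy)]; ring
    have hD1eq : ∀ s ∈ Ioo (t j) (t (j+1)), D1 s = deriv^[1] F s - P.derivative.eval s := by
      intro s hs
      have h0 := hFd 0 (by omega) s hs
      rw [Function.iterate_zero_apply] at h0
      have h1 := h0.sub (Polynomial.hasDerivAt P s)
      have h2 := h1.congr_of_eventuallyEq (hEeq s hs)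
      exact (hED1 s (hOIoo hs)).unique h2
    have hD1dn : ∀ s ∈ Ioo (t j) (t (j+1)), HasDerivAt D1
        (deriv^[2] F s - (P.derivative.derivative).eval s) s := by
      intro s hs
      have h1 := (hFd 1 (by omega) s hs).sub (Polynomial.hasDerivAt P.derivative s)
      refine h1.congr_of_eventuallyEq ?_
      exact Filter.eventuallyEq_of_mem (isOpen_Ioo.mem_nhds hs) (fun y hy => hD1eq y hy)
    have hD2eq : ∀ s ∈ Ioo (t j) (t (j+1)),
        D2 s = deriv^[2] F s - (P.derivative.derivative).eval s :=
      fun s hs => (hD1D2 s (hOIoo hs)).unique (hD1dn s hs)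
    have hD2dn : ∀ s ∈ Ioo (t j) (t (j+1)), HasDerivAt D2
        (deriv^[3] F s - (P.derivative.derivative.derivative).eval s) s := by
      intro s hs
      have h1 := (hFd 2 (by omega) s hs).sub (Polynomial.hasDerivAt P.derivative.derivative s)
      refine h1.congr_of_eventuallyEq ?_
      exact Filter.eventuallyEq_of_mem (isOpen_Ioo.mem_nhds hs) (fun y hy => hD2eq y hy)
    have hP4 : (P.derivative.derivative.derivative).derivative = 0 := by
      have hnd : P.natDegree < 4 := by
        have h3 : P.natDegree ≤ 3 :=
          Polynomial.natDegree_le_iff_degree_le.mpr (by exact_mod_cast hdeg)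
        omega
      have h4 : Polynomial.derivative^[4] P = 0 := Polynomial.iterate_derivative_eq_zero hnd
      rw [show (4:ℕ) = 3+1 from rfl, Function.iterate_succ_apply] at h4
      rw [show (3:ℕ) = 2+1 from rfl, Function.iterate_succ_apply] at h4
      rw [show (2:ℕ) = 1+1 from rfl, Function.iterate_succ_apply] at h4
      rw [show (1:ℕ) = 0+1 from rfl, Function.iterate_succ_apply,
        Function.iterate_zero_apply] at h4
      exact h4
    have hf3f4 : ∀ s ∈ Ioo (t j) (t (j+1)), HasDerivAt
        (fun y => deriv^[3] F y - (P.derivative.derivative.derivative).eval y)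
        (deriv^[4] F s) s := by
      intro s hs
      have h0 := (hFd 3 (by omega) s hs).fun_sub
        (Polynomial.hasDerivAt (P.derivative.derivative.derivative) s)
      simpa [hP4] using h0
    have hbnd : ∀ s ∈ Ioo (t j) (t (j+1)), |deriv^[4] F s| ≤ K := fun s hs => (hd4 s hs).2
    have hz1 : E (t j) = 0 := hknots j (by omega)
    have hz2 : E (t (j+1)) = 0 := hknots (j+1) (by omega)
    exact piece hj1 hK (hEc.mono hIsub) (hD1c.mono hIsub) (hD2c.mono hIsub)
      (fun s hs => hED1 s (hOIoo hs)) (fun s hs => hD1D2 s (hOIoo hs))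
      hD2dn hf3f4 hbnd hz1 hz2
  -- maximum principle for knot slopes
  obtain ⟨jm, hjmmem, hjmmax⟩ := Finset.exists_max_image (Finset.range (n+1))
    (fun i => |D1 (t i)|) ⟨0, Finset.mem_range.mpr (by omega)⟩
  have hall : ∀ i, i ≤ n → |D1 (t i)| ≤ |D1 (t jm)| :=
    fun i hi => hjmmax i (Finset.mem_range.mpr (by omega))
  have hMbound : |D1 (t jm)| ≤ K*τ^3/24 := by
    have hjmn : jm ≤ n := by have := Finset.mem_range.mp hjmmem; omega
    by_cases hjm0 : jm = 0
    · subst hjm0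
      have hp := (hpieces 0 (by omega)).1
      rw [hD2a, zero_add] at hp
      have hh : (0:ℝ) < t (0+1) - t 0 := sub_pos.mpr (hstep 0 (by omega))
      rw [abs_div, abs_of_pos hh] at hp
      have hXa := (div_le_iff₀ hh).mp hp
      have hX : |2*D1 (t 0) + D1 (t (0+1))| ≤ K*(t (0+1) - t 0)^3/24 := by
        have h2 : |2*(2*D1 (t 0) + D1 (t (0+1)))| = 2*|2*D1 (t 0) + D1 (t (0+1))| := by
          rw [abs_mul]; simp
        linarith [hXa, h2]
      have htri : |2*D1 (t 0)| ≤ |2*D1 (t 0) + D1 (t (0+1))| + |D1 (t (0+1))| := by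
        have h := abs_add_le (2*D1 (t 0) + D1 (t (0+1))) (-(D1 (t (0+1))))
        have he : (2*D1 (t 0) + D1 (t (0+1))) + (-(D1 (t (0+1)))) = 2*D1 (t 0) := by ring
        rw [he, abs_neg] at h
        exact h
      have h2M : |2*D1 (t 0)| = 2*|D1 (t 0)| := by rw [abs_mul]; simp
      have hb1 : |D1 (t (0+1))| ≤ |D1 (t 0)| := hall (0+1) (by omega)
      have hhτ : t (0+1) - t 0 ≤ τ := hstepτ 0 (by omega)
      have hpow : K*(t (0+1) - t 0)^3 ≤ K*τ^3 :=
        mul_le_mul_of_nonneg_left (pow_le_pow_left₀ hh.le hhτ 3) hK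
      linarith
    · by_cases hjmn' : jm = n
      · rw [hjmn'] at hall ⊢
        have he1 : n - 1 + 1 = n := by omega
        have hp := (hpieces (n-1) (by omega)).2.1
        rw [he1, hD2b, zero_sub, abs_neg] at hp
        have hh : (0:ℝ) < t n - t (n-1) := by
          have := hstep (n-1) (by omega); rw [he1] at this; linarith
        rw [abs_div, abs_of_pos hh] at hp
        have hXa := (div_le_iff₀ hh).mp hp
        have hX : |D1 (t (n-1)) + 2*D1 (t n)| ≤ K*(t n - t (n-1))^3/24 := by
          have h2 : |2*(D1 (t (n-1)) + 2*D1 (t n))| = 2*|D1 (t (n-1)) + 2*D1 (t n)| := by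
            rw [abs_mul]; simp
          linarith [hXa, h2]
        have htri : |2*D1 (t n)| ≤ |D1 (t (n-1)) + 2*D1 (t n)| + |D1 (t (n-1))| := by
          have h := abs_add_le (D1 (t (n-1)) + 2*D1 (t n)) (-(D1 (t (n-1))))
          have he : (D1 (t (n-1)) + 2*D1 (t n)) + (-(D1 (t (n-1)))) = 2*D1 (t n) := by ring
          rw [he, abs_neg] at h
          exact h
        have h2M : |2*D1 (t n)| = 2*|D1 (t n)| := by rw [abs_mul]; simp
        have hb1 : |D1 (t (n-1))| ≤ |D1 (t n)| := hall (n-1) (by omega)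
        have hhτ : t n - t (n-1) ≤ τ := by
          have := hstepτ (n-1) (by omega); rw [he1] at this; exact this
        have hpow : K*(t n - t (n-1))^3 ≤ K*τ^3 :=
          mul_le_mul_of_nonneg_left (pow_le_pow_left₀ hh.le hhτ 3) hK
        linarith
      · -- interior knot
        have he1 : jm - 1 + 1 = jm := by omega
        have hpL := (hpieces (jm-1) (by omega)).2.1
        rw [he1] at hpL
        have hpR := (hpieces jm (by omega)).1
        have hh1 : (0:ℝ) < t jm - t (jm-1) := by
          have := hstep (jm-1) (by omega); rw [he1] at this; linarith
        have hh2 : (0:ℝ) < t (jm+1) - t jm := sub_pos.mpr (hstep jm (by omega))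
        have hh1τ : t jm - t (jm-1) ≤ τ := by
          have := hstepτ (jm-1) (by omega); rw [he1] at this; exact this
        have hh2τ : t (jm+1) - t jm ≤ τ := hstepτ jm (by omega)
        set h1 : ℝ := t jm - t (jm-1) with hh1d
        set h2 : ℝ := t (jm+1) - t jm with hh2d
        set a : ℝ := D1 (t (jm-1)) with had
        set b : ℝ := D1 (t jm) with hbd
        set d : ℝ := D1 (t (jm+1)) with hdd
        have hba : |a| ≤ |b| := hall (jm-1) (by omega)
        have hbd2 : |d| ≤ |b| := hall (jm+1) (by omega)
        clear_value h1 h2 a b d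
        -- combine the two inequalities
        have hAB : |2*(a + 2*b)/h1 + 2*(2*b + d)/h2| ≤ K*h1^2/12 + K*h2^2/12 := by
          have hrw : 2*(a + 2*b)/h1 + 2*(2*b + d)/h2
              = (D2 (t jm) + 2*(2*b + d)/h2) - (D2 (t jm) - 2*(a + 2*b)/h1) := by ring
          rw [hrw]
          have h := abs_add_le (D2 (t jm) + 2*(2*b + d)/h2) (-(D2 (t jm) - 2*(a + 2*b)/h1))
          rw [abs_neg] at h
          have he : (D2 (t jm) + 2*(2*b + d)/h2) + (-(D2 (t jm) - 2*(a + 2*b)/h1))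
              = (D2 (t jm) + 2*(2*b + d)/h2) - (D2 (t jm) - 2*(a + 2*b)/h1) := by ring
          rw [he] at h
          exact h.trans (by linarith [hpR, hpL])
        have hW : |2*h2*(a + 2*b) + 2*h1*(2*b + d)| ≤ h1*h2*(K*h1^2/12 + K*h2^2/12) := by
          have heq : 2*h2*(a + 2*b) + 2*h1*(2*b + d)
              = (h1*h2)*(2*(a + 2*b)/h1 + 2*(2*b + d)/h2) := by
            field_simp
          rw [heq, abs_mul, abs_of_pos (mul_pos hh1 hh2)]
          exact mul_le_mul_of_nonneg_left hAB (mul_pos hh1 hh2).le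
        have htri : |(4*h1+4*h2)*b| ≤ |2*h2*(a + 2*b) + 2*h1*(2*b + d)|
            + |2*h2*a| + |2*h1*d| := by
          have hrw : (4*h1+4*h2)*b = (2*h2*(a + 2*b) + 2*h1*(2*b + d))
              + (-(2*h2*a)) + (-(2*h1*d)) := by ring
          rw [hrw]
          calc |(2*h2*(a + 2*b) + 2*h1*(2*b + d)) + (-(2*h2*a)) + (-(2*h1*d))|
              ≤ |(2*h2*(a + 2*b) + 2*h1*(2*b + d)) + (-(2*h2*a))| + |(-(2*h1*d))| := abs_add_le _ _
            _ ≤ |2*h2*(a + 2*b) + 2*h1*(2*b + d)| + |(-(2*h2*a))| + |(-(2*h1*d))| := by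
                have := abs_add_le (2*h2*(a + 2*b) + 2*h1*(2*b + d)) (-(2*h2*a))
                linarith
            _ = |2*h2*(a + 2*b) + 2*h1*(2*b + d)| + |2*h2*a| + |2*h1*d| := by
                rw [abs_neg, abs_neg]
        have hlhs : |(4*h1+4*h2)*b| = (4*h1+4*h2)*|b| := by
          rw [abs_mul, abs_of_pos (by linarith : (0:ℝ) < 4*h1+4*h2)]
        have hra : |2*h2*a| = 2*h2*|a| := by
          rw [abs_mul, abs_of_pos (by linarith : (0:ℝ) < 2*h2)]
        have hrd : |2*h1*d| = 2*h1*|d| := by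
          rw [abs_mul, abs_of_pos (by linarith : (0:ℝ) < 2*h1)]
        -- 2(h1+h2)|b| ≤ h1 h2 K (h1^2+h2^2)/12
        have hmain : 2*(h1+h2)*|b| ≤ h1*h2*(K*h1^2/12 + K*h2^2/12) := by
          have c1 : 2*h2*|a| ≤ 2*h2*|b| := mul_le_mul_of_nonneg_left hba (by positivity)
          have c2 : 2*h1*|d| ≤ 2*h1*|b| := mul_le_mul_of_nonneg_left hbd2 (by positivity)
          linarith [htri, hW, hlhs, hra, hrd, c1, c2]
        have haux1 : 2*(h1*h2) ≤ (h1+h2)*τ := by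
          nlinarith [mul_nonneg (sub_nonneg.mpr hh1τ) hh2.le,
            mul_nonneg (sub_nonneg.mpr hh2τ) hh1.le]
        have haux2 : h1^2 + h2^2 ≤ 2*τ^2 := by
          have e1 : h1^2 ≤ τ^2 := pow_le_pow_left₀ hh1.le hh1τ 2
          have e2 : h2^2 ≤ τ^2 := pow_le_pow_left₀ hh2.le hh2τ 2
          linarith
        have hpoly : h1*h2*(h1^2+h2^2) ≤ (h1+h2)*τ^3 := by
          have h := mul_le_mul haux1 haux2 (by positivity) (by positivity)
          nlinarith [h]
        have hfinal : 2*(h1+h2)*|b| ≤ K*((h1+h2)*τ^3)/12 := by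
          have h := mul_le_mul_of_nonneg_left hpoly hK
          linarith [hmain, h]
        have hfinal2 : (2*(h1+h2))*|b| ≤ (2*(h1+h2))*(K*τ^3/24) := by
          calc (2*(h1+h2))*|b| ≤ K*((h1+h2)*τ^3)/12 := hfinal
            _ = (2*(h1+h2))*(K*τ^3/24) := by ring
        exact le_of_mul_le_mul_left hfinal2 (by positivity)
  -- final assembly
  intro s hs
  have hcover : ∃ j, j < n ∧ t j ≤ s ∧ s ≤ t (j+1) := by
    classical
    have hP0 : t 0 ≤ s := hs.1
    set j := Nat.findGreatest (fun i => t i ≤ s) (n-1) with hj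
    have hjle : j ≤ n - 1 := Nat.findGreatest_le _
    have hPj : t j ≤ s := by
      have h := Nat.findGreatest_spec (P := fun i => t i ≤ s) (Nat.zero_le (n-1)) hP0
      simpa [← hj] using h
    refine ⟨j, by omega, hPj, ?_⟩
    by_contra hcon
    push_neg at hcon
    rcases le_or_gt (j+1) (n-1) with hle | hgt
    · exact Nat.findGreatest_is_greatest (by rw [← hj]; omega) hle hcon.le
    · have hjn : j + 1 = n := by omega
      rw [hjn] at hcon
      exact absurd hs.2 (not_le.mpr hcon)
  obtain ⟨j, hjn, hjs1, hjs2⟩ := hcover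
  have hC := (hpieces j hjn).2.2 s ⟨hjs1, hjs2⟩
  have hmax : max |D1 (t j)| |D1 (t (j+1))| ≤ |D1 (t jm)| :=
    max_le (hall j (by omega)) (hall (j+1) (by omega))
  have hhj : (0:ℝ) < t (j+1) - t j := sub_pos.mpr (hstep j hjn)
  have hhjτ : t (j+1) - t j ≤ τ := hstepτ j hjn
  have hpow : K*(t (j+1) - t j)^3/24 ≤ K*τ^3/24 := by
    have := mul_le_mul_of_nonneg_left (pow_le_pow_left₀ hhj.le hhjτ 3) hK
    linarith
  have hfin : |D1 s| ≤ K*τ^3/24 + K*τ^3/24 := by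
    calc |D1 s| ≤ max |D1 (t j)| |D1 (t (j+1))| + K*(t (j+1) - t j)^3/24 := hC
      _ ≤ |D1 (t jm)| + K*τ^3/24 := add_le_add hmax hpow
      _ ≤ K*τ^3/24 + K*τ^3/24 := add_le_add_left hMbound _
  show |D1 s| ≤ 1/12*K*τ^3
  linarith
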